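/- Let X be a compact uniform space and f_{0,∞} = {f_n} an equi-continuous sequence of continuous self-maps of X (i.e., for every entourage γ there is an entourage η such that (x,y) ∈ η implies (f_i^k(x), f_i^k(y)) ∈ γ for all i ≥ 0 and all compositions f_i^k of length k along the sequence). Then h(f_{0,∞}^n) = n · h(f_{0,∞}) for every n ≥ 1. -/

import Mathlib

open Filter Set
open scoped Uniformity

/-- `itr f i n = f (i+n-1) ∘ ⋯ ∘ f i`, the composition of `n` maps of the sequence `f`
starting at index `i` (so `itr f i 0 = id`). -/
def itr {X : Type*} (f : ℕ → X → X) (i : ℕ) : ℕ → X → X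
  | 0 => id
  | n + 1 => fun x => f (i + n) (itr f i n x)

/-- `E` is an `(n,γ)`-separated set for the nonautonomous system `f`. -/
def IsSep {X : Type*} (f : ℕ → X → X) (n : ℕ) (γ : Set (X × X)) (E : Set X) : Prop :=
  ∀ x ∈ E, ∀ y ∈ E, x ≠ y → ∃ j < n, (itr f 0 j x, itr f 0 j y) ∉ γ

/-- `F` `(n,γ)`-spans the set `K` for the nonautonomous system `f`. -/
def Spans {X : Type*} (f : ℕ → X → X) (n : ℕ) (γ : Set (X × X)) (F K : Set X) : Prop :=
  ∀ x ∈ K, ∃ y ∈ F, ∀ j < n, (itr f 0 j x, itr f 0 j y) ∈ γ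

/-- Maximal cardinality of an `(n,γ)`-separated subset of `Λ`. -/
noncomputable def sepCard {X : Type*} (f : ℕ → X → X) (Λ : Set X) (n : ℕ)
    (γ : Set (X × X)) : ℕ :=
  sSup {m | ∃ E : Finset X, ↑E ⊆ Λ ∧ IsSep f n γ ↑E ∧ E.card = m}

/-- Minimal cardinality of a subset of `Λ` that `(n,γ)`-spans `Λ`. -/
noncomputable def spanCard {X : Type*} (f : ℕ → X → X) (Λ : Set X) (n : ℕ)
    (γ : Set (X × X)) : ℕ :=
  sInf {m | ∃ F : Finset X, ↑F ⊆ Λ ∧ Spans f n γ ↑F Λ ∧ F.card = m}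


section aux
variable {X : Type*}

lemma itr_add (f : ℕ → X → X) (i a : ℕ) : ∀ (b : ℕ) (x : X),
    itr f i (a + b) x = itr f (i + a) b (itr f i a x)
  | 0, x => rfl
  | b + 1, x => by
    show f (i + (a + b)) (itr f i (a+b) x) = f (i + a + b) (itr f (i+a) b (itr f i a x))
    rw [itr_add f i a b x, Nat.add_assoc]

lemma itr_iterate (f : ℕ → X → X) (n : ℕ) : ∀ (m : ℕ) (x : X),
    itr (fun k => itr f (k * n) n) 0 m x = itr f 0 (m * n) x
  | 0, x => by rw [Nat.zero_mul]; rfl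
  | m + 1, x => by
    show itr f ((0 + m) * n) n (itr (fun k => itr f (k * n) n) 0 m x) = _
    rw [itr_iterate f n m x, Nat.zero_add, Nat.succ_mul, itr_add f 0 (m*n) n x, Nat.zero_add]

lemma itr_continuous [TopologicalSpace X] {f : ℕ → X → X} (hf : ∀ k, Continuous (f k))
    (i : ℕ) : ∀ k, Continuous (itr f i k)
  | 0 => continuous_id
  | k + 1 => (hf (i + k)).comp (itr_continuous hf i k)

end aux

section bdd
variable {X : Type*} [UniformSpace X] [CompactSpace X]

lemma sep_bddAbove {f : ℕ → X → X} (hf : ∀ k, Continuous (f k))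
    (Λ : Set X) (N : ℕ) {γ : Set (X × X)} (hγ : γ ∈ 𝓤 X) :
    BddAbove {m | ∃ E : Finset X, ↑E ⊆ Λ ∧ IsSep f N γ ↑E ∧ E.card = m} := by
  classical
  obtain ⟨η, hη, hsymm, hcomp⟩ := comp_symm_mem_uniformity_sets hγ
  set η' : Set (X × X) :=
    ⋂ j ∈ Finset.range N, (fun p : X × X => (itr f 0 j p.1, itr f 0 j p.2)) ⁻¹' η with hη'def
  have hη' : η' ∈ 𝓤 X := by
    refine (Filter.biInter_finset_mem _).2 fun j _ => ?_
    exact (CompactSpace.uniformContinuous_of_continuous (itr_continuous hf 0 j)) hη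
  obtain ⟨t, ht⟩ := CompactSpace.elim_nhds_subcover (fun x => UniformSpace.ball x η')
    (fun x => UniformSpace.ball_mem_nhds x hη')
  refine ⟨t.card, ?_⟩
  rintro m ⟨E, hEΛ, hsep, rfl⟩
  have hcov : ∀ e : X, ∃ x ∈ t, (x, e) ∈ η' := by
    intro e
    have : e ∈ ⋃ x ∈ t, UniformSpace.ball x η' := ht ▸ mem_univ e
    simpa [UniformSpace.ball] using this
  refine Finset.card_le_card_of_injOn (fun e => (hcov e).choose)
    (fun e _ => (hcov e).choose_spec.1) ?_
  intro e he e' he' hee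
  by_contra hne
  obtain ⟨j, hjN, hj⟩ := hsep e he e' he' hne
  apply hj
  apply hcomp
  have h1 : ((hcov e).choose, e) ∈ η' := (hcov e).choose_spec.2
  have h2 : ((hcov e).choose, e') ∈ η' := by
    have hee' : (hcov e).choose = (hcov e').choose := hee
    have := (hcov e').choose_spec.2
    rwa [← hee'] at this
  have hjr : j ∈ Finset.range N := Finset.mem_range.2 hjN
  have m1 : (itr f 0 j (hcov e).choose, itr f 0 j e) ∈ η := by
    have := Set.mem_iInter₂.1 h1 j hjr; exact this
  have m2 : (itr f 0 j (hcov e).choose, itr f 0 j e') ∈ η := by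
    have := Set.mem_iInter₂.1 h2 j hjr; exact this
  exact ⟨itr f 0 j (hcov e).choose, hsymm.symm _ _ m1, m2⟩

end bdd

section sepCardLemmas
variable {X : Type*}

lemma zero_mem_sepSet (f : ℕ → X → X) (Λ : Set X) (N : ℕ) (γ : Set (X × X)) :
    0 ∈ {m | ∃ E : Finset X, ↑E ⊆ Λ ∧ IsSep f N γ ↑E ∧ E.card = m} :=
  ⟨∅, by simp, by intro x hx; simp at hx, by simp⟩

lemma sepCard_le_sepCard {f g : ℕ → X → X} {Λ : Set X} {N M : ℕ} {γ δ : Set (X × X)}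
    (h : ∀ E : Finset X, ↑E ⊆ Λ → IsSep f N γ ↑E → IsSep g M δ ↑E)
    (hbdd : BddAbove {m | ∃ E : Finset X, ↑E ⊆ Λ ∧ IsSep g M δ ↑E ∧ E.card = m}) :
    sepCard f Λ N γ ≤ sepCard g Λ M δ :=
  csSup_le_csSup hbdd ⟨0, zero_mem_sepSet f Λ N γ⟩
    (by rintro m ⟨E, h1, h2, h3⟩; exact ⟨E, h1, h E h1 h2, h3⟩)

lemma one_le_sepCard [Nonempty X] (f : ℕ → X → X) (N : ℕ) (γ : Set (X × X))
    (hbdd : BddAbove {m | ∃ E : Finset X, ↑E ⊆ (Set.univ : Set X) ∧ IsSep f N γ ↑E ∧ E.card = m}) :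
    1 ≤ sepCard f Set.univ N γ := by
  obtain ⟨x⟩ := ‹Nonempty X›
  refine le_csSup hbdd ⟨{x}, by simp, ?_, by simp⟩
  intro a ha b hb hab
  simp only [Finset.coe_singleton, Set.mem_singleton_iff] at ha hb
  exact absurd (ha.trans hb.symm) hab

lemma isSep_mono_time {f : ℕ → X → X} {γ : Set (X × X)} {N M : ℕ} (h : N ≤ M)
    {E : Set X} (hE : IsSep f N γ E) : IsSep f M γ E := by
  intro x hx y hy hxy
  obtain ⟨j, hj, hj'⟩ := hE x hx y hy hxy
  exact ⟨j, hj.trans_le h, hj'⟩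

end sepCardLemmas

noncomputable def mulIso (c : ℝ) (hc : 0 < c) : EReal ≃o EReal where
  toFun x := (c : EReal) * x
  invFun x := ((c⁻¹ : ℝ) : EReal) * x
  left_inv x := by
    show ((c⁻¹ : ℝ) : EReal) * ((c : EReal) * x) = x
    rw [← mul_assoc, ← EReal.coe_mul, inv_mul_cancel₀ hc.ne', EReal.coe_one, one_mul]
  right_inv x := by
    show ((c : EReal)) * (((c⁻¹ : ℝ) : EReal) * x) = x
    rw [← mul_assoc, ← EReal.coe_mul, mul_inv_cancel₀ hc.ne', EReal.coe_one, one_mul]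
  map_rel_iff' := by
    intro x y
    show (c : EReal) * x ≤ (c : EReal) * y ↔ x ≤ y
    constructor
    · intro h
      have := mul_le_mul_of_nonneg_left h (le_of_lt (by exact_mod_cast inv_pos.2 hc :
        (0 : EReal) < ((c⁻¹ : ℝ) : EReal)))
      rwa [← mul_assoc, ← mul_assoc, ← EReal.coe_mul, inv_mul_cancel₀ hc.ne',
        EReal.coe_one, one_mul, one_mul] at this
    · intro h
      exact mul_le_mul_of_nonneg_left h (le_of_lt (by exact_mod_cast hc))

lemma limsup_const_mul_ereal {α : Type*} {F : Filter α} (u : α → EReal) {c : ℝ} (hc : 0 < c) :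
    F.limsup (fun x => (c : EReal) * u x) = (c : EReal) * F.limsup u :=
  ((mulIso c hc).limsup_apply (u := u)).symm

lemma limsup_comp_mul_le (u : ℕ → EReal) {n : ℕ} (hn : 1 ≤ n) :
    Filter.limsup (fun k => u (k * n)) atTop ≤ Filter.limsup u atTop := by
  have hφ : Tendsto (fun k : ℕ => k * n) atTop atTop :=
    tendsto_atTop_mono (fun k => Nat.le_mul_of_pos_right k hn) tendsto_id
  have h1 : Filter.limsup (fun k => u (k * n)) atTop
      = Filter.limsup u (Filter.map (fun k : ℕ => k * n) atTop) := by
    rw [Filter.limsup, Filter.limsup, Filter.map_map]; rfl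
  rw [h1]
  exact limsup_le_limsup_of_le hφ

lemma limsup_div_le_limsup_mul (a : ℕ → ℝ) (ha0 : ∀ m, 0 ≤ a m) (hmono : Monotone a)
    {n : ℕ} (hn : 1 ≤ n) :
    Filter.limsup (fun m : ℕ => ((a m / m : ℝ) : EReal)) atTop
      ≤ Filter.limsup (fun k : ℕ => ((a (k * n) / (k * n) : ℝ) : EReal)) atTop := by
  set L := Filter.limsup (fun k : ℕ => ((a (k * n) / (k * n) : ℝ) : EReal)) atTop with hL
  have hL0 : (0 : EReal) ≤ L := by
    apply le_limsup_of_frequently_le (Frequently.of_forall fun k => ?_)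
    exact EReal.coe_nonneg.2 (div_nonneg (ha0 _) (by positivity))
  refine (limsup_le_iff).2 fun b hb => ?_
  obtain ⟨c', hc'1, hc'2⟩ := EReal.exists_between_coe_real hb
  obtain ⟨c, hc1, hc2⟩ := EReal.exists_between_coe_real hc'1
  have hcc' : c < c' := by exact_mod_cast hc2
  have hc0 : (0 : ℝ) < c := by
    have : (0 : EReal) < (c : EReal) := lt_of_le_of_lt hL0 hc1
    exact_mod_cast this
  have hev : ∀ᶠ k in atTop, ((a (k * n) / (k * n) : ℝ) : EReal) < (c : EReal) :=
    eventually_lt_of_limsup_lt hc1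
  obtain ⟨K, hK⟩ := eventually_atTop.1 hev
  obtain ⟨M₁, hM₁⟩ := exists_nat_gt (c * n / (c' - c))
  refine eventually_atTop.2 ⟨max ((K + 1) * n) (M₁ + 1), fun m hm => ?_⟩
  have hm1 : (K + 1) * n ≤ m := le_trans (le_max_left _ _) hm
  have hm2 : M₁ + 1 ≤ m := le_trans (le_max_right _ _) hm
  have hn0 : 0 < n := hn
  have hmpos : 0 < m := lt_of_lt_of_le (by positivity) hm1
  have hm0 : (0 : ℝ) < m := by exact_mod_cast hmpos
  set k := m / n + 1 with hk
  have hkK : K ≤ k := by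
    have : K + 1 ≤ m / n := (Nat.le_div_iff_mul_le hn0).2 hm1
    omega
  have hmk : m < k * n := (Nat.div_lt_iff_lt_mul hn0).1 (Nat.lt_succ_self _)
  have hknm : k * n ≤ m + n := by
    have : m / n * n ≤ m := Nat.div_mul_le_self m n
    calc k * n = m / n * n + n := by ring
    _ ≤ m + n := by omega
  have hkpos : (0 : ℝ) < k := by exact_mod_cast Nat.succ_pos (m / n)
  have hnR : (0 : ℝ) < n := by exact_mod_cast hn0
  have hkn0 : (0 : ℝ) < (k : ℝ) * n := mul_pos hkpos hnR
  have hak : a (k * n) < c * ((k : ℝ) * n) := by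
    have h2 : a (k * n) / ((k : ℝ) * n) < c := by exact_mod_cast hK k hkK
    exact (div_lt_iff₀ hkn0).1 h2
  have ham : a m ≤ a (k * n) := hmono hmk.le
  have hknR : (k : ℝ) * n ≤ (m : ℝ) + n := by exact_mod_cast hknm
  have h4 : c * n < (c' - c) * m := by
    have hd : (0 : ℝ) < c' - c := by linarith
    have hM : c * n / (c' - c) < m := by
      have : (M₁ : ℝ) < m := by exact_mod_cast hm2
      linarith [hM₁]
    calc c * n = c * n / (c' - c) * (c' - c) := by field_simp
    _ < (m : ℝ) * (c' - c) := mul_lt_mul_of_pos_right hM hd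
    _ = (c' - c) * m := by ring
  have h5 : c * ((k : ℝ) * n) ≤ c * ((m : ℝ) + n) := mul_le_mul_of_nonneg_left hknR hc0.le
  have key : a m / m < c' := by
    rw [div_lt_iff₀ hm0]
    nlinarith [hak, ham, h4, h5]
  calc ((a m / m : ℝ) : EReal) < (c' : EReal) := by exact_mod_cast key
  _ < b := hc'2

lemma nmul_div (x : ℝ) (m n : ℕ) (hn : 1 ≤ n) :
    (n : ℝ) * (x / ((m * n : ℕ) : ℝ)) = x / m := by
  rcases Nat.eq_zero_or_pos m with hm | hm
  · subst hm; simp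
  · have hm0 : ((m : ℝ)) ≠ 0 := by positivity
    have hn0 : ((n : ℝ)) ≠ 0 := by positivity
    push_cast
    field_simp

lemma log_div_le_log_div {A B m : ℕ} (h1 : 1 ≤ A) (hAB : A ≤ B) :
    Real.log A / (m : ℝ) ≤ Real.log B / (m : ℝ) := by
  rcases Nat.eq_zero_or_pos m with hm | hm
  · subst hm; simp
  · have hm0 : (0 : ℝ) < m := by exact_mod_cast hm
    have hA : (1 : ℝ) ≤ (A : ℝ) := by exact_mod_cast h1
    have hB : (A : ℝ) ≤ (B : ℝ) := by exact_mod_cast hAB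
    have hlog : Real.log A ≤ Real.log B :=
      (Real.log_le_log_iff (by linarith) (by linarith)).2 hB
    gcongr

/-- Topological entropy of the nonautonomous system `f` on the set `Λ`, defined via
separated sets; by antitonicity in the entourage, the supremum over all entourages agrees
with the limit along the net of symmetric open entourages used in the paper. -/
noncomputable def entropy {X : Type*} [UniformSpace X] (f : ℕ → X → X) (Λ : Set X) : EReal :=
  ⨆ γ ∈ 𝓤 X, atTop.limsup fun n : ℕ =>
    ((Real.log (sepCard f Λ n γ) / n : ℝ) : EReal)

lemma entropy_def {X : Type*} [UniformSpace X] (f : ℕ → X → X) (Λ : Set X) :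
    entropy f Λ = ⨆ γ ∈ 𝓤 X, atTop.limsup fun n : ℕ =>
      ((Real.log (sepCard f Λ n γ) / n : ℝ) : EReal) := rfl

/-- For an equi-continuous nonautonomous system, the entropy of the `n`-th iterate system
equals `n` times the entropy of the system. -/
theorem entropy_iterate_eq {X : Type*} [UniformSpace X] [CompactSpace X]
    (f : ℕ → X → X) (hf : ∀ k, Continuous (f k))
    (hequi : ∀ γ ∈ 𝓤 X, ∀ m : ℕ, ∃ η ∈ 𝓤 X, ∀ x y : X, (x, y) ∈ η →
      ∀ i : ℕ, ∀ k < m, (itr f i k x, itr f i k y) ∈ γ)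
    (n : ℕ) (hn : 1 ≤ n) :
    entropy (fun k => itr f (k * n) n) Set.univ = (n : EReal) * entropy f Set.univ := by
  classical
  rcases isEmpty_or_nonempty X with hX | hX
  · -- empty space : both sides are zero
    have hsC : ∀ (f' : ℕ → X → X) (γ : Set (X × X)) (m : ℕ), sepCard f' univ m γ = 0 := by
      intro f' γ m
      have : {m' | ∃ E : Finset X, ↑E ⊆ (univ : Set X) ∧ IsSep f' m γ ↑E ∧ E.card = m'} = {0} := by
        ext m'
        constructor
        · rintro ⟨E, -, -, rfl⟩
          have : E = (∅ : Finset X) := Finset.eq_empty_of_isEmpty E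
          simp [this]
        · rintro rfl
          exact zero_mem_sepSet f' univ m γ
      rw [sepCard, this, csSup_singleton]
    have hE : ∀ f' : ℕ → X → X, entropy f' univ = 0 := by
      intro f'
      rw [entropy_def]
      have h0 : ∀ γ : Set (X × X), (atTop.limsup fun m : ℕ =>
          ((Real.log (sepCard f' univ m γ) / m : ℝ) : EReal)) = 0 := by
        intro γ
        have : (fun m : ℕ => ((Real.log (sepCard f' univ m γ) / m : ℝ) : EReal))
            = fun _ : ℕ => (0 : EReal) := by
          funext m; rw [hsC]; simp
        rw [this, limsup_const]
      simp only [h0]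
      apply le_antisymm
      · exact iSup₂_le fun γ hγ => le_rfl
      · exact le_iSup₂ (f := fun (γ : Set (X × X)) (_ : γ ∈ 𝓤 X) => (0 : EReal)) univ univ_mem
    rw [hE, hE, mul_zero]
  · -- nonempty case
    have hn0 : 0 < n := hn
    have hnR : (0 : ℝ) < n := by exact_mod_cast hn0
    have hgc : ∀ k, Continuous (itr f (k * n) n) := fun k => itr_continuous hf (k * n) n
    have hbF : ∀ (γ : Set (X × X)), γ ∈ 𝓤 X → ∀ m : ℕ,
        BddAbove {m' | ∃ E : Finset X, ↑E ⊆ (univ : Set X) ∧ IsSep f m γ ↑E ∧ E.card = m'} :=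
      fun γ hγ m => sep_bddAbove hf univ m hγ
    have hbG : ∀ (γ : Set (X × X)), γ ∈ 𝓤 X → ∀ m : ℕ,
        BddAbove {m' | ∃ E : Finset X, ↑E ⊆ (univ : Set X) ∧
          IsSep (fun k => itr f (k * n) n) m γ ↑E ∧ E.card = m'} :=
      fun γ hγ m => sep_bddAbove hgc univ m hγ
    have h1F : ∀ (γ : Set (X × X)), γ ∈ 𝓤 X → ∀ m : ℕ, 1 ≤ sepCard f univ m γ :=
      fun γ hγ m => one_le_sepCard f m γ (hbF γ hγ m)
    have h1G : ∀ (γ : Set (X × X)), γ ∈ 𝓤 X → ∀ m : ℕ,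
        1 ≤ sepCard (fun k => itr f (k * n) n) univ m γ :=
      fun γ hγ m => one_le_sepCard _ m γ (hbG γ hγ m)
    have nonnegF : ∀ (γ : Set (X × X)), γ ∈ 𝓤 X →
        ∀ m : ℕ, 0 ≤ Real.log (sepCard f univ m γ) := by
      intro γ hγ m
      exact Real.log_nonneg (by exact_mod_cast h1F γ hγ m)
    have monoF : ∀ (γ : Set (X × X)), γ ∈ 𝓤 X →
        Monotone (fun m : ℕ => Real.log (sepCard f univ m γ)) := by
      intro γ hγ m m' hmm'
      have hle : sepCard f univ m γ ≤ sepCard f univ m' γ :=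
        sepCard_le_sepCard (fun E _ hE => isSep_mono_time hmm' hE) (hbF γ hγ m')
      have p1 : (0 : ℝ) < sepCard f univ m γ := by
        have := h1F γ hγ m; exact_mod_cast Nat.lt_of_lt_of_le Nat.zero_lt_one this
      have p2 : (0 : ℝ) < sepCard f univ m' γ := by
        have := h1F γ hγ m'; exact_mod_cast Nat.lt_of_lt_of_le Nat.zero_lt_one this
      exact (Real.log_le_log_iff p1 p2).2 (by exact_mod_cast hle)
    have C1 : ∀ (γ : Set (X × X)), γ ∈ 𝓤 X → ∀ m : ℕ,
        sepCard (fun k => itr f (k * n) n) univ m γ ≤ sepCard f univ (m * n) γ := by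
      intro γ hγ m
      apply sepCard_le_sepCard ?_ (hbF γ hγ (m * n))
      intro E _ hE x hx y hy hxy
      obtain ⟨j, hj, hj'⟩ := hE x hx y hy hxy
      refine ⟨j * n, mul_lt_mul_of_pos_right hj hn0, ?_⟩
      rw [itr_iterate f n j x, itr_iterate f n j y] at hj'
      exact hj'
    have C2 : ∀ (γ : Set (X × X)), γ ∈ 𝓤 X → ∃ η ∈ 𝓤 X, ∀ m : ℕ,
        sepCard f univ (m * n) γ ≤ sepCard (fun k => itr f (k * n) n) univ m η := by
      intro γ hγ
      obtain ⟨η, hη, hprop⟩ := hequi γ hγ n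
      refine ⟨η, hη, fun m => ?_⟩
      apply sepCard_le_sepCard ?_ (hbG η hη m)
      intro E _ hE x hx y hy hxy
      obtain ⟨l, hl, hl'⟩ := hE x hx y hy hxy
      refine ⟨l / n, (Nat.div_lt_iff_lt_mul hn0).2 hl, ?_⟩
      intro hmem
      apply hl'
      rw [itr_iterate f n (l / n) x, itr_iterate f n (l / n) y] at hmem
      have h := hprop _ _ hmem (l / n * n) (l % n) (Nat.mod_lt l hn0)
      have ex : ∀ z : X, itr f (l / n * n) (l % n) (itr f 0 (l / n * n) z) = itr f 0 l z := by
        intro z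
        have e1 : l / n * n + l % n = l := by
          rw [Nat.mul_comm]; exact Nat.div_add_mod l n
        calc itr f (l / n * n) (l % n) (itr f 0 (l / n * n) z)
            = itr f (0 + l / n * n) (l % n) (itr f 0 (l / n * n) z) := by rw [Nat.zero_add]
          _ = itr f 0 (l / n * n + l % n) z := (itr_add f 0 _ _ z).symm
          _ = itr f 0 l z := by rw [e1]
      rw [ex x, ex y] at h
      exact h
    have hcast : (n : EReal) = ((n : ℝ) : EReal) := (EReal.coe_coe_eq_natCast n).symm
    apply le_antisymm
    · -- entropy g ≤ n * entropy f
      rw [entropy_def]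
      refine iSup₂_le fun γ hγ => ?_
      calc atTop.limsup (fun m : ℕ =>
            ((Real.log (sepCard (fun k => itr f (k * n) n) univ m γ) / m : ℝ) : EReal))
          ≤ atTop.limsup (fun m : ℕ => ((n : ℝ) : EReal) *
            ((Real.log (sepCard f univ (m * n) γ) / ((m * n : ℕ) : ℝ) : ℝ) : EReal)) := by
            refine limsup_le_limsup (Eventually.of_forall fun m => ?_)
            beta_reduce
            rw [← EReal.coe_mul]
            apply EReal.coe_le_coe_iff.2
            rw [nmul_div _ m n hn]
            exact log_div_le_log_div (h1G γ hγ m) (C1 γ hγ m)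
        _ = ((n : ℝ) : EReal) * atTop.limsup (fun m : ℕ =>
            ((Real.log (sepCard f univ (m * n) γ) / ((m * n : ℕ) : ℝ) : ℝ) : EReal)) :=
            limsup_const_mul_ereal _ hnR
        _ ≤ ((n : ℝ) : EReal) * atTop.limsup (fun m : ℕ =>
            ((Real.log (sepCard f univ m γ) / m : ℝ) : EReal)) := by
            apply mul_le_mul_of_nonneg_left ?_ (by exact_mod_cast hnR.le)
            exact limsup_comp_mul_le
              (fun m : ℕ => ((Real.log (sepCard f univ m γ) / m : ℝ) : EReal)) hn
        _ ≤ ((n : ℝ) : EReal) * entropy f univ := by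
            apply mul_le_mul_of_nonneg_left ?_ (by exact_mod_cast hnR.le)
            rw [entropy_def]
            exact le_iSup₂ (f := fun (γ' : Set (X × X)) (_ : γ' ∈ 𝓤 X) =>
              atTop.limsup fun m : ℕ =>
                ((Real.log (sepCard f univ m γ') / m : ℝ) : EReal)) γ hγ
        _ = (n : EReal) * entropy f univ := by rw [hcast]
    · -- n * entropy f ≤ entropy g
      rw [hcast]
      have hiso : ((n : ℝ) : EReal) * entropy f univ = ⨆ γ ∈ 𝓤 X,
          ((n : ℝ) : EReal) * atTop.limsup (fun m : ℕ =>
            ((Real.log (sepCard f univ m γ) / m : ℝ) : EReal)) := by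
        rw [entropy_def]
        show (mulIso (n : ℝ) hnR) (⨆ γ ∈ 𝓤 X, atTop.limsup fun m : ℕ =>
          ((Real.log (sepCard f univ m γ) / m : ℝ) : EReal)) = _
        rw [OrderIso.map_iSup]
        refine iSup_congr fun γ => ?_
        rw [OrderIso.map_iSup]
        rfl
      rw [hiso]
      refine iSup₂_le fun γ hγ => ?_
      obtain ⟨η, hη, comp⟩ := C2 γ hγ
      calc ((n : ℝ) : EReal) * atTop.limsup (fun m : ℕ =>
            ((Real.log (sepCard f univ m γ) / m : ℝ) : EReal))
          ≤ ((n : ℝ) : EReal) * atTop.limsup (fun k : ℕ =>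
            ((Real.log (sepCard f univ (k * n) γ) / (k * n) : ℝ) : EReal)) := by
            apply mul_le_mul_of_nonneg_left ?_ (by exact_mod_cast hnR.le)
            exact limsup_div_le_limsup_mul (fun m => Real.log (sepCard f univ m γ))
              (nonnegF γ hγ) (monoF γ hγ) hn
        _ = atTop.limsup (fun k : ℕ =>
            (((n : ℝ) * (Real.log (sepCard f univ (k * n) γ) / (k * n)) : ℝ) : EReal)) := by
            rw [← limsup_const_mul_ereal _ hnR]
            exact limsup_congr (Eventually.of_forall fun x => (EReal.coe_mul _ _).symm)
        _ ≤ atTop.limsup (fun k : ℕ =>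
            ((Real.log (sepCard (fun k' => itr f (k' * n) n) univ k η) / k : ℝ) : EReal)) := by
            refine limsup_le_limsup (Eventually.of_forall fun k => ?_)
            beta_reduce
            apply EReal.coe_le_coe_iff.2
            have e1 : (n : ℝ) * (Real.log (sepCard f univ (k * n) γ) / ((k : ℝ) * (n : ℝ)))
                = (n : ℝ) * (Real.log (sepCard f univ (k * n) γ) / ((k * n : ℕ) : ℝ)) := by
              rw [Nat.cast_mul]
            rw [e1, nmul_div _ k n hn]
            exact log_div_le_log_div (h1F γ hγ (k * n)) (comp k)
        _ ≤ entropy (fun k => itr f (k * n) n) univ := by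
            rw [entropy_def]
            exact le_iSup₂ (f := fun (γ' : Set (X × X)) (_ : γ' ∈ 𝓤 X) =>
              atTop.limsup fun m : ℕ =>
                ((Real.log (sepCard (fun k => itr f (k * n) n) univ m γ') / m : ℝ) : EReal)) η hη
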